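/- Let f : Δ → Δ be a uniformly continuous, sequentially locally non-constant function from the n-dimensional simplex into itself which has approximate fixed points (for every ε > 0 there is x with |x − f(x)| < ε). Then f has a fixed point. -/

import Mathlib

open Filter Topology

/-- Brouwer's fixed point theorem for sequentially locally non-constant functions:
a uniformly continuous self-map of the standard n-simplex which is sequentially
locally non-constant and has approximate fixed points has a fixed point. -/
theorem stmt_4 (n : ℕ)
    (Δ : Set (EuclideanSpace ℝ (Fin (n + 1))))
    (hΔ : Δ = {x | (∀ i, 0 ≤ x i) ∧ ∑ i, x i = 1})
    (f : EuclideanSpace ℝ (Fin (n + 1)) → EuclideanSpace ℝ (Fin (n + 1)))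
    (hmaps : Set.MapsTo f Δ Δ)
    (hf : UniformContinuousOn f Δ)
    (hslnc : ∃ εbar > (0 : ℝ), ∀ ε, 0 < ε → ε ≤ εbar →
      ∃ (m : ℕ) (H : Fin m → Set (EuclideanSpace ℝ (Fin (n + 1)))),
        (∀ i, TotallyBounded (H i)) ∧ (∀ i, Metric.diam (H i) ≤ ε) ∧
        (⋃ i, H i) = Δ ∧
        ∀ i, ∀ x y : ℕ → EuclideanSpace ℝ (Fin (n + 1)),
          (∀ k, x k ∈ H i) → (∀ k, y k ∈ H i) →
          Tendsto (fun k => dist (f (x k)) (x k)) atTop (𝓝 0) →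
          Tendsto (fun k => dist (f (y k)) (y k)) atTop (𝓝 0) →
          Tendsto (fun k => dist (x k) (y k)) atTop (𝓝 0))
    (happrox : ∀ ε > (0 : ℝ), ∃ x ∈ Δ, dist x (f x) < ε) :
    ∃ z ∈ Δ, f z = z := by
  -- Δ is compact: closed and bounded in a finite-dimensional space.
  have hclosed : IsClosed Δ := by
    rw [hΔ]
    have h1 : IsClosed {x : EuclideanSpace ℝ (Fin (n + 1)) | ∀ i, 0 ≤ x i} := by
      have : {x : EuclideanSpace ℝ (Fin (n + 1)) | ∀ i, 0 ≤ x i}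
          = ⋂ i, {x | 0 ≤ x i} := by ext x; simp
      rw [this]
      exact isClosed_iInter fun i =>
        isClosed_le continuous_const (PiLp.continuous_apply 2 _ i)
    have h2 : IsClosed {x : EuclideanSpace ℝ (Fin (n + 1)) | ∑ i, x i = 1} :=
      isClosed_eq (continuous_finset_sum _ fun i _ => PiLp.continuous_apply 2 _ i) continuous_const
    exact h1.inter h2
  have hbdd : Bornology.IsBounded Δ := by
    apply Bornology.IsBounded.subset (Metric.isBounded_closedBall (x := 0) (r := 1))
    intro x hx
    rw [hΔ] at hx
    obtain ⟨hpos, hsum⟩ := hx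
    have hle1 : ∀ i, x i ≤ 1 := by
      intro i
      calc x i ≤ ∑ j, x j := Finset.single_le_sum (fun j _ => hpos j) (Finset.mem_univ i)
        _ = 1 := hsum
    simp only [Metric.mem_closedBall, dist_zero_right]
    have hnorm : ‖x‖ = Real.sqrt (∑ i, x i ^ 2) := by
      simpa [Real.sqrt_eq_rpow] using EuclideanSpace.norm_eq x
    rw [hnorm]
    have : ∑ i, x i ^ 2 ≤ 1 := by
      calc ∑ i, x i ^ 2 ≤ ∑ i, x i := by
            apply Finset.sum_le_sum
            intro i _
            nlinarith [hpos i, hle1 i]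
        _ = 1 := hsum
    calc Real.sqrt (∑ i, x i ^ 2) ≤ Real.sqrt 1 := Real.sqrt_le_sqrt this
      _ = 1 := Real.sqrt_one
  have hcompact : IsCompact Δ := Metric.isCompact_of_isClosed_isBounded hclosed hbdd
  -- approximate fixed point sequence
  have hx : ∀ k : ℕ, ∃ x ∈ Δ, dist x (f x) < 1 / (k + 1) := fun k =>
    happrox _ (by positivity)
  choose x hxΔ hxdist using hx
  obtain ⟨z, hzΔ, φ, hφ, hlim⟩ := hcompact.tendsto_subseq hxΔ
  refine ⟨z, hzΔ, ?_⟩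
  -- f is continuous on Δ
  have hcont : ContinuousOn f Δ := hf.continuousOn
  have hlim' : Tendsto (fun k => x (φ k)) atTop (𝓝[Δ] z) :=
    tendsto_nhdsWithin_of_tendsto_nhds_of_eventually_within _ hlim
      (Eventually.of_forall fun k => hxΔ (φ k))
  have hflim : Tendsto (fun k => f (x (φ k))) atTop (𝓝 (f z)) :=
    (hcont z hzΔ).tendsto.comp hlim'
  have hd : Tendsto (fun k => dist (x (φ k)) (f (x (φ k)))) atTop (𝓝 (dist z (f z))) :=
    (hlim.dist hflim)
  have hd0 : Tendsto (fun k => dist (x (φ k)) (f (x (φ k)))) atTop (𝓝 0) := by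
    have hupper : ∀ k, dist (x (φ k)) (f (x (φ k))) ≤ 1 / (φ k + 1) := fun k =>
      (hxdist (φ k)).le
    have h1 : Tendsto (fun k : ℕ => 1 / ((φ k : ℝ) + 1)) atTop (𝓝 0) := by
      apply Tendsto.comp (tendsto_one_div_add_atTop_nhds_zero_nat)
      exact hφ.tendsto_atTop
    exact squeeze_zero (fun k => dist_nonneg) hupper h1
  have : dist z (f z) = 0 := tendsto_nhds_unique hd hd0
  exact (dist_eq_zero.mp this).symm
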